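/- Stability of the sewing under convergence of germs: Let E be a real Banach space, T > 0, 0 < α ≤ 1 < β, R ≥ 0 and K ≥ 0. Let A and, for each n ∈ ℕ, Aⁿ be maps Δ₂ → E vanishing on the diagonal, with ‖δA‖_β ≤ R and ‖δAⁿ‖_β ≤ R for all n, and suppose ‖Aⁿ − A‖_α → 0 as n → ∞. Let f and fⁿ be functions [0,T] → E with f(0) = fⁿ(0) = 0 satisfying ‖f_{s,t} − A_{s,t}‖_E ≤ K(t−s)^β and ‖fⁿ_{s,t} − Aⁿ_{s,t}‖_E ≤ K(t−s)^β for all 0 ≤ s ≤ t ≤ T and all n. Then sup_{0 ≤ s < t ≤ T} ‖(fⁿ(t) − fⁿ(s)) − (f(t) − f(s))‖_E/(t−s)^α → 0 as n → ∞. -/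

import Mathlib

/-- Stability of the sewing under convergence of germs: let `0 < α ≤ 1 < β`, let `A` and
`Aⁿ` be germs vanishing on the diagonal with `‖δA‖_β ≤ R`, `‖δAⁿ‖_β ≤ R`, and
`‖Aⁿ − A‖_α → 0`. If `f, fⁿ : [0,T] → E` vanish at `0` and satisfy
`‖f_{s,t} − A_{s,t}‖ ≤ K (t−s)^β` and `‖fⁿ_{s,t} − Aⁿ_{s,t}‖ ≤ K (t−s)^β`, then
`‖fⁿ − f‖_α := sup ‖(fⁿ(t) − fⁿ(s)) − (f(t) − f(s))‖/(t−s)^α → 0`, expressed here in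
`ε`-`N` form. -/
theorem sewing_stability
    {E : Type*} [NormedAddCommGroup E] [NormedSpace ℝ E]
    (T α β R K : ℝ) (hT : 0 < T) (hα : 0 < α) (hα1 : α ≤ 1) (hβ : 1 < β)
    (hR : 0 ≤ R) (hK : 0 ≤ K)
    (A : ℝ → ℝ → E) (An : ℕ → ℝ → ℝ → E) (f : ℝ → E) (fn : ℕ → ℝ → E)
    (hdiag : ∀ t ∈ Set.Icc (0 : ℝ) T, A t t = 0)
    (hdiagn : ∀ n, ∀ t ∈ Set.Icc (0 : ℝ) T, An n t t = 0)
    (hδA : ∀ s u t : ℝ, 0 ≤ s → s ≤ u → u ≤ t → t ≤ T →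
      ‖A s t - A s u - A u t‖ ≤ R * (t - s) ^ β)
    (hδAn : ∀ n, ∀ s u t : ℝ, 0 ≤ s → s ≤ u → u ≤ t → t ≤ T →
      ‖An n s t - An n s u - An n u t‖ ≤ R * (t - s) ^ β)
    (hAconv : ∀ ε : ℝ, 0 < ε → ∃ N : ℕ, ∀ n ≥ N, ∀ s t : ℝ, 0 ≤ s → s ≤ t → t ≤ T →
      ‖An n s t - A s t‖ ≤ ε * (t - s) ^ α)
    (hf0 : f 0 = 0) (hfn0 : ∀ n, fn n 0 = 0)
    (hf : ∀ s t : ℝ, 0 ≤ s → s ≤ t → t ≤ T →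
      ‖(f t - f s) - A s t‖ ≤ K * (t - s) ^ β)
    (hfn : ∀ n, ∀ s t : ℝ, 0 ≤ s → s ≤ t → t ≤ T →
      ‖(fn n t - fn n s) - An n s t‖ ≤ K * (t - s) ^ β) :
    ∀ ε : ℝ, 0 < ε → ∃ N : ℕ, ∀ n ≥ N, ∀ s t : ℝ, 0 ≤ s → s ≤ t → t ≤ T →
      ‖(fn n t - fn n s) - (f t - f s)‖ ≤ ε * (t - s) ^ α := by
  intro ε hε
  set C : ℝ := 2 * K * T ^ (β - α) with hCdef
  have hC0 : 0 ≤ C := by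
    have : (0:ℝ) ≤ T ^ (β - α) := Real.rpow_nonneg hT.le _
    positivity
  obtain ⟨m, hm⟩ := exists_nat_ge (max 1 ((2 * C / ε) ^ (β - 1)⁻¹))
  set M : ℝ := (m : ℝ) with hMdef
  have hM1 : 1 ≤ M := le_trans (le_max_left _ _) hm
  have hM0 : (0:ℝ) < M := lt_of_lt_of_le one_pos hM1
  have hMb : (2 * C / ε) ≤ M ^ (β - 1) := by
    have hc0 : (0:ℝ) ≤ 2 * C / ε := div_nonneg (by linarith) hε.le
    have h1 : (2 * C / ε) ^ (β - 1)⁻¹ ≤ M := le_trans (le_max_right _ _) hm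
    have h2 : ((2 * C / ε) ^ (β - 1)⁻¹) ^ (β - 1) ≤ M ^ (β - 1) := by
      apply Real.rpow_le_rpow (Real.rpow_nonneg hc0 _) h1 (by linarith)
    rwa [Real.rpow_inv_rpow hc0 (by intro hcon; linarith)] at h2
  have hCM : C / M ^ (β - 1) ≤ ε / 2 := by
    rw [div_le_iff₀ (Real.rpow_pos_of_pos hM0 _)]
    rw [div_le_iff₀ hε] at hMb
    linarith
  have hε' : (0:ℝ) < ε / (2 * M) := div_pos hε (by linarith)
  obtain ⟨N, hN⟩ := hAconv (ε / (2 * M)) hε'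
  refine ⟨N, fun n hn s t hs hst htT => ?_⟩
  rcases eq_or_lt_of_le hst with rfl | hst'
  · simp only [sub_self]
    rw [Real.zero_rpow (ne_of_gt hα)]
    simp
  have hts : (0:ℝ) < t - s := by linarith
  set h : ℝ := (t - s) / M with hhdef
  have hh0 : 0 < h := div_pos hts hM0
  set g : ℕ → ℝ := fun i => s + i * h with hgdef
  have hg0 : g 0 = s := by simp [hgdef]
  have hgm : g m = t := by
    simp only [hgdef, hhdef]
    field_simp
    rw [← hMdef]; ring
  have hgstep : ∀ i : ℕ, g (i+1) - g i = h := by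
    intro i; simp only [hgdef]; push_cast; ring
  have hgmono : ∀ i j : ℕ, i ≤ j → g i ≤ g j := by
    intro i j hij
    simp only [hgdef]
    have : (i:ℝ) ≤ j := by exact_mod_cast hij
    nlinarith
  have hgmem : ∀ i : ℕ, i ≤ m → 0 ≤ g i ∧ g i ≤ T := by
    intro i hi
    constructor
    · have : s = g 0 := hg0.symm
      have := hgmono 0 i (Nat.zero_le _)
      rw [hg0] at this; linarith
    · have := hgmono i m hi
      rw [hgm] at this; linarith
  have key : ∀ i ∈ Finset.range m,
      ‖(fn n (g (i+1)) - fn n (g i)) - (f (g (i+1)) - f (g i))‖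
        ≤ 2 * K * h ^ β + (ε / (2 * M)) * h ^ α := by
    intro i hi
    rw [Finset.mem_range] at hi
    obtain ⟨ha0, _⟩ := hgmem i hi.le
    obtain ⟨_, hbT⟩ := hgmem (i+1) hi
    have hab : g i ≤ g (i+1) := hgmono i (i+1) (Nat.le_succ _)
    have e1 := hfn n (g i) (g (i+1)) ha0 hab hbT
    have e2 := hN n hn (g i) (g (i+1)) ha0 hab hbT
    have e3 := hf (g i) (g (i+1)) ha0 hab hbT
    have hstep := hgstep i
    calc ‖(fn n (g (i+1)) - fn n (g i)) - (f (g (i+1)) - f (g i))‖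
        = ‖((fn n (g (i+1)) - fn n (g i)) - An n (g i) (g (i+1)))
            + (An n (g i) (g (i+1)) - A (g i) (g (i+1)))
            + (A (g i) (g (i+1)) - (f (g (i+1)) - f (g i)))‖ := by
          congr 1; abel
      _ ≤ ‖(fn n (g (i+1)) - fn n (g i)) - An n (g i) (g (i+1))‖
            + ‖An n (g i) (g (i+1)) - A (g i) (g (i+1))‖
            + ‖A (g i) (g (i+1)) - (f (g (i+1)) - f (g i))‖ := norm_add₃_le
      _ ≤ K * (g (i+1) - g i) ^ β + (ε / (2 * M)) * (g (i+1) - g i) ^ α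
            + K * (g (i+1) - g i) ^ β := by
          rw [norm_sub_rev] at e3
          exact add_le_add (add_le_add e1 e2) e3
      _ = 2 * K * h ^ β + (ε / (2 * M)) * h ^ α := by rw [hstep]; ring
  have tel : (fn n t - fn n s) - (f t - f s)
      = ∑ i ∈ Finset.range m, ((fn n (g (i+1)) - fn n (g i)) - (f (g (i+1)) - f (g i))) := by
    rw [Finset.sum_sub_distrib, Finset.sum_range_sub (fun i => fn n (g i)),
      Finset.sum_range_sub (fun i => f (g i)), hg0, hgm]
  have hsum : ‖(fn n t - fn n s) - (f t - f s)‖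
      ≤ M * (2 * K * h ^ β + (ε / (2 * M)) * h ^ α) := by
    rw [tel]
    calc ‖∑ i ∈ Finset.range m, ((fn n (g (i+1)) - fn n (g i)) - (f (g (i+1)) - f (g i)))‖
        ≤ ∑ i ∈ Finset.range m, ‖(fn n (g (i+1)) - fn n (g i)) - (f (g (i+1)) - f (g i))‖ :=
          norm_sum_le _ _
      _ ≤ ∑ _i ∈ Finset.range m, (2 * K * h ^ β + (ε / (2 * M)) * h ^ α) :=
          Finset.sum_le_sum key
      _ = M * (2 * K * h ^ β + (ε / (2 * M)) * h ^ α) := by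
          rw [Finset.sum_const, Finset.card_range, nsmul_eq_mul]
  -- now the algebra
  have hhts : h ≤ t - s := by
    rw [hhdef]
    exact div_le_self hts.le hM1
  have hhα : h ^ α ≤ (t - s) ^ α := Real.rpow_le_rpow hh0.le hhts hα.le
  have hterm2 : M * ((ε / (2 * M)) * h ^ α) ≤ (ε / 2) * (t - s) ^ α := by
    have : M * (ε / (2 * M)) = ε / 2 := by field_simp
    calc M * ((ε / (2 * M)) * h ^ α) = (ε / 2) * h ^ α := by rw [← mul_assoc, this]
      _ ≤ (ε / 2) * (t - s) ^ α := by gcongr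
  have hterm1 : M * (2 * K * h ^ β) ≤ (ε / 2) * (t - s) ^ α := by
    have hhb : h ^ β = (t - s) ^ β / M ^ β := Real.div_rpow hts.le hM0.le β
    have htsb : (t - s) ^ β ≤ T ^ (β - α) * (t - s) ^ α := by
      have heq : (t - s) ^ β = (t - s) ^ (β - α) * (t - s) ^ α := by
        rw [← Real.rpow_add hts]; ring_nf
      rw [heq]
      exact mul_le_mul_of_nonneg_right
        (Real.rpow_le_rpow hts.le (by linarith) (by linarith))
        (Real.rpow_nonneg hts.le _)
    have hMsplit : M ^ β = M ^ (β - 1) * M := by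
      have : M ^ (β - 1) * M ^ (1:ℝ) = M ^ β := by
        rw [← Real.rpow_add hM0]; ring_nf
      rw [Real.rpow_one] at this
      exact this.symm
    have hMβ0 : (0:ℝ) < M ^ β := Real.rpow_pos_of_pos hM0 _
    have hMb10 : (0:ℝ) < M ^ (β - 1) := Real.rpow_pos_of_pos hM0 _
    calc M * (2 * K * h ^ β) = 2 * K * (t - s) ^ β * (M / M ^ β) := by
          rw [hhb]; ring
      _ ≤ 2 * K * (T ^ (β - α) * (t - s) ^ α) * (M / M ^ β) := by
          have hd : (0:ℝ) ≤ M / M ^ β := le_of_lt (div_pos hM0 hMβ0)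
          exact mul_le_mul_of_nonneg_right (by nlinarith [htsb]) hd
      _ = (C / M ^ (β - 1)) * (t - s) ^ α := by
          have hq : M / (M ^ (β - 1) * M) = 1 / M ^ (β - 1) := by
            rw [mul_comm, div_mul_eq_div_div, div_self hM0.ne']
          rw [hCdef, hMsplit, hq]
          ring
      _ ≤ (ε / 2) * (t - s) ^ α :=
          mul_le_mul_of_nonneg_right hCM (Real.rpow_nonneg hts.le _)
  calc ‖(fn n t - fn n s) - (f t - f s)‖
      ≤ M * (2 * K * h ^ β + (ε / (2 * M)) * h ^ α) := hsum
    _ = M * (2 * K * h ^ β) + M * ((ε / (2 * M)) * h ^ α) := by ring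
    _ ≤ (ε / 2) * (t - s) ^ α + (ε / 2) * (t - s) ^ α := add_le_add hterm1 hterm2
    _ = ε * (t - s) ^ α := by ring
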